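/- In the degree dynamics, if f(n−1, 0) < β, then every vertex that is isolated (has degree 0) in G(t) remains isolated in G(t') for all t' ≥ t. -/
import Mathlib


/-- Degree of a vertex: cardinality of its neighborhood. -/
noncomputable def deg {V : Type*} (G : SimpleGraph V) (v : V) : ℕ :=
  (G.neighborSet v).ncard

lemma deg_le_card_sub_one {V : Type*} [Fintype V] (G : SimpleGraph V) (v : V) :
    deg G v ≤ Fintype.card V - 1 := by
  classical
  have h : G.neighborSet v ⊆ {v}ᶜ := by
    intro u hu
    simp only [Set.mem_compl_iff, Set.mem_singleton_iff]
    exact fun h => G.ne_of_adj hu (h ▸ rfl)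
  have := Set.ncard_le_ncard h (Set.toFinite _)
  have hc : ({v}ᶜ : Set V).ncard = Fintype.card V - 1 := by
    rw [Set.ncard_eq_toFinset_card', Set.toFinset_compl, Set.toFinset_singleton,
      Finset.card_compl, Finset.card_singleton]
  unfold deg
  omega

lemma deg_eq_zero_iff {V : Type*} [Fintype V] (G : SimpleGraph V) (v : V) :
    deg G v = 0 ↔ ∀ u, ¬ G.Adj v u := by
  unfold deg
  rw [Set.ncard_eq_zero (Set.toFinite _)]
  constructor
  · intro h u hu
    exact Set.eq_empty_iff_forall_notMem.mp h u hu
  · intro h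
    exact Set.eq_empty_iff_forall_notMem.mpr h

/-- in the degree dynamics, if f(n−1, 0) < β then isolated vertices
stay isolated forever. -/
theorem degreeDynamics_isolated_stays_isolated {V : Type*} [Fintype V]
    (f : ℕ → ℕ → ℝ)
    (hsym : ∀ x y, f x y = f y x)
    (hmono : ∀ x₁ x₂ y₁ y₂ : ℕ, x₁ ≤ x₂ → y₁ ≤ y₂ → f x₁ y₁ ≤ f x₂ y₂)
    (β : ℝ) (G : ℕ → SimpleGraph V)
    (hdyn : ∀ t : ℕ, ∀ u v : V, u ≠ v →
      ((G (t + 1)).Adj u v ↔ β ≤ f (deg (G t) u) (deg (G t) v)))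
    (hf : f (Fintype.card V - 1) 0 < β) :
    ∀ t : ℕ, ∀ v : V, deg (G t) v = 0 → ∀ t' ≥ t, deg (G t') v = 0 := by
  intro t v h0 t' ht'
  induction t' , ht' using Nat.le_induction with
  | base => exact h0
  | succ s hs ih =>
    rw [deg_eq_zero_iff]
    intro u hadj
    have hne : v ≠ u := G (s+1) |>.ne_of_adj hadj
    have := (hdyn s v u hne).mp hadj
    have hle : f (deg (G s) v) (deg (G s) u) ≤ f (Fintype.card V - 1) 0 := by
      rw [ih, hsym]
      exact hmono _ _ _ _ (deg_le_card_sub_one _ _) le_rfl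
    linarith
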